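/- (Lemma 6.10) Let ξ = exp(iπ/5) ∈ ℂ, τ = (1+√5)/2 and τ' = 1 - τ. For every integer n ≥ 3 there exist p, q ∈ ℤ such that |p + qτ| ≤ n and |p + qτ'| ≤ n, yet p + qτ is not expressible as Σ_{j=0}^{9} n_j ξ^j with n_j ∈ ℕ and Σ_{j=0}^{9} n_j ≤ n. Hence the inclusion L(n) ⊆ Σ([-n, n]) ∩ [-n, n] is strict for all n ≥ 3 (deficiencies occur). For example, for n = 3 one may take the point -1 + 2τ. -/
import Mathlib


noncomputable def tau : ℝ := (1 + Real.sqrt 5) / 2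

noncomputable def tau' : ℝ := 1 - tau

/-- ξ = exp(iπ/5), a primitive 10th root of unity. -/
noncomputable def xi : ℂ := Complex.exp (Real.pi * Complex.I / 5)

/-- L(n): the real points of the quasicrystal fragment Q₂(n). -/
noncomputable def L (n : ℕ) : Set ℝ :=
  {x : ℝ | ∃ m : Fin 10 → ℕ, (∑ j, m j) ≤ n ∧ (x : ℂ) = ∑ j, (m j : ℂ) * xi ^ (j : ℕ)}

/-- Lemma 6.10: for every n ≥ 3 the inclusion L(n) ⊆ Σ([-n,n]) ∩ [-n,n] is strict:
there is a point of the cut-and-project set Σ([-n,n]) in [-n,n] not belonging to L(n).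
For n = 3, the point -1 + 2τ is such a deficiency. -/



lemma sqrt5_sq : Real.sqrt 5 * Real.sqrt 5 = 5 :=
  Real.mul_self_sqrt (by norm_num)

lemma sqrt5_lt : Real.sqrt 5 ≤ 9/4 := by
  nlinarith [sqrt5_sq, Real.sqrt_nonneg 5]

lemma sqrt5_irr : Irrational (Real.sqrt 5) := by
  have : (5:ℝ) = ((5:ℕ):ℝ) := by norm_num
  rw [this]
  exact (by norm_num : Nat.Prime 5).irrational_sqrt

lemma int_sqrt5 {A B : ℤ} (h : (A:ℝ) + (B:ℝ) * Real.sqrt 5 = 0) : A = 0 ∧ B = 0 := by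
  by_cases hB : B = 0
  · subst hB; simp at h; exact ⟨by exact_mod_cast h, rfl⟩
  · exfalso
    have hB' : (B:ℝ) ≠ 0 := Int.cast_ne_zero.mpr hB
    have : Real.sqrt 5 = ((-A : ℚ)/(B : ℚ) : ℚ) := by
      push_cast
      field_simp
      linarith
    exact sqrt5_irr ⟨_, this.symm⟩


noncomputable def sp : ℝ := Real.sin (Real.pi/5)

lemma sp_ne : sp ≠ 0 := by
  have := Real.sin_pos_of_pos_of_lt_pi (x := Real.pi/5)
    (by positivity) (by nlinarith [Real.pi_pos])
  rw [sp]; linarith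

lemma cos1 : Real.cos (Real.pi/5) = (1 + Real.sqrt 5)/4 := Real.cos_pi_div_five

lemma cos2 : Real.cos (2*Real.pi/5) = (Real.sqrt 5 - 1)/4 := by
  have h : (2*Real.pi/5) = 2*(Real.pi/5) := by ring
  rw [h, Real.cos_two_mul, cos1]
  nlinarith [sqrt5_sq]

lemma sin2 : Real.sin (2*Real.pi/5) = sp * (1 + Real.sqrt 5)/2 := by
  have h : (2*Real.pi/5) = 2*(Real.pi/5) := by ring
  rw [h, Real.sin_two_mul, cos1, sp]; ring

lemma xi_pow (k : ℕ) : xi ^ k =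
    Complex.ofReal (Real.cos (k*Real.pi/5)) +
    Complex.ofReal (Real.sin (k*Real.pi/5)) * Complex.I := by
  rw [xi, ← Complex.exp_nat_mul]
  have h : (k : ℂ) * (Real.pi * Complex.I / 5) = ((k*Real.pi/5 : ℝ) : ℂ) * Complex.I := by
    push_cast; ring
  rw [h, Complex.exp_mul_I, Complex.ofReal_cos, Complex.ofReal_sin]

lemma cos3 : Real.cos (3*Real.pi/5) = -((Real.sqrt 5 - 1)/4) := by
  have h : (3*Real.pi/5) = Real.pi - 2*Real.pi/5 := by ring
  rw [h, Real.cos_pi_sub, cos2]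
lemma sin3 : Real.sin (3*Real.pi/5) = sp * (1 + Real.sqrt 5)/2 := by
  have h : (3*Real.pi/5) = Real.pi - 2*Real.pi/5 := by ring
  rw [h, Real.sin_pi_sub, sin2]
lemma cos4 : Real.cos (4*Real.pi/5) = -((1 + Real.sqrt 5)/4) := by
  have h : (4*Real.pi/5) = Real.pi - Real.pi/5 := by ring
  rw [h, Real.cos_pi_sub, cos1]
lemma sin4 : Real.sin (4*Real.pi/5) = sp := by
  have h : (4*Real.pi/5) = Real.pi - Real.pi/5 := by ring
  rw [h, Real.sin_pi_sub, sp]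
lemma cos6 : Real.cos (6*Real.pi/5) = -((1 + Real.sqrt 5)/4) := by
  have h : (6*Real.pi/5) = 2*Real.pi - 4*Real.pi/5 := by ring
  rw [h, Real.cos_two_pi_sub, cos4]
lemma sin6 : Real.sin (6*Real.pi/5) = -sp := by
  have h : (6*Real.pi/5) = 2*Real.pi - 4*Real.pi/5 := by ring
  rw [h, Real.sin_two_pi_sub, sin4]
lemma cos7 : Real.cos (7*Real.pi/5) = -((Real.sqrt 5 - 1)/4) := by
  have h : (7*Real.pi/5) = 2*Real.pi - 3*Real.pi/5 := by ring
  rw [h, Real.cos_two_pi_sub, cos3]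
lemma sin7 : Real.sin (7*Real.pi/5) = -(sp * (1 + Real.sqrt 5)/2) := by
  have h : (7*Real.pi/5) = 2*Real.pi - 3*Real.pi/5 := by ring
  rw [h, Real.sin_two_pi_sub, sin3]
lemma cos8 : Real.cos (8*Real.pi/5) = (Real.sqrt 5 - 1)/4 := by
  have h : (8*Real.pi/5) = 2*Real.pi - 2*Real.pi/5 := by ring
  rw [h, Real.cos_two_pi_sub, cos2]
lemma sin8 : Real.sin (8*Real.pi/5) = -(sp * (1 + Real.sqrt 5)/2) := by
  have h : (8*Real.pi/5) = 2*Real.pi - 2*Real.pi/5 := by ring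
  rw [h, Real.sin_two_pi_sub, sin2]
lemma cos9 : Real.cos (9*Real.pi/5) = (1 + Real.sqrt 5)/4 := by
  have h : (9*Real.pi/5) = 2*Real.pi - Real.pi/5 := by ring
  rw [h, Real.cos_two_pi_sub, cos1]
lemma sin9 : Real.sin (9*Real.pi/5) = -sp := by
  have h : (9*Real.pi/5) = 2*Real.pi - Real.pi/5 := by ring
  rw [h, Real.sin_two_pi_sub, sp]

lemma xi0 : xi ^ 0 = 1 := by norm_num
lemma xi1 : xi ^ 1 = Complex.ofReal ((1+Real.sqrt 5)/4) + Complex.ofReal sp * Complex.I := by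
  rw [xi_pow]; norm_num [cos1, sp]
lemma xi2 : xi ^ 2 = Complex.ofReal ((Real.sqrt 5 - 1)/4)
    + Complex.ofReal (sp * (1+Real.sqrt 5)/2) * Complex.I := by
  rw [xi_pow]; norm_num [cos2, sin2]
lemma xi3 : xi ^ 3 = Complex.ofReal (-((Real.sqrt 5 - 1)/4))
    + Complex.ofReal (sp * (1+Real.sqrt 5)/2) * Complex.I := by
  rw [xi_pow]; norm_num [cos3, sin3]
lemma xi4 : xi ^ 4 = Complex.ofReal (-((1+Real.sqrt 5)/4)) + Complex.ofReal sp * Complex.I := by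
  rw [xi_pow]; norm_num [cos4, sin4]
lemma xi5 : xi ^ 5 = Complex.ofReal (-1) + Complex.ofReal 0 * Complex.I := by
  rw [xi_pow]; norm_num
lemma xi6 : xi ^ 6 = Complex.ofReal (-((1+Real.sqrt 5)/4)) + Complex.ofReal (-sp) * Complex.I := by
  rw [xi_pow]; norm_num [cos6, sin6]
lemma xi7 : xi ^ 7 = Complex.ofReal (-((Real.sqrt 5 - 1)/4))
    + Complex.ofReal (-(sp * (1+Real.sqrt 5)/2)) * Complex.I := by
  rw [xi_pow]; norm_num [cos7, sin7]
lemma xi8 : xi ^ 8 = Complex.ofReal ((Real.sqrt 5 - 1)/4)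
    + Complex.ofReal (-(sp * (1+Real.sqrt 5)/2)) * Complex.I := by
  rw [xi_pow]; norm_num [cos8, sin8]
lemma xi9 : xi ^ 9 = Complex.ofReal ((1+Real.sqrt 5)/4) + Complex.ofReal (-sp) * Complex.I := by
  rw [xi_pow]; norm_num [cos9, sin9]

lemma sum10 {M : Type*} [AddCommMonoid M] (f : Fin 10 → M) :
    ∑ j, f j = f 0 + f 1 + f 2 + f 3 + f 4 + f 5 + f 6 + f 7 + f 8 + f 9 := by
  show ∑ j : Fin (9+1), f j = _
  simp only [Fin.sum_univ_castSucc,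
    show ((Fin.last 1).castSucc.castSucc.castSucc.castSucc.castSucc.castSucc.castSucc.castSucc : Fin 10) = 1 from rfl,
    show ((Fin.last 2).castSucc.castSucc.castSucc.castSucc.castSucc.castSucc.castSucc : Fin 10) = 2 from rfl,
    show ((Fin.last 3).castSucc.castSucc.castSucc.castSucc.castSucc.castSucc : Fin 10) = 3 from rfl,
    show ((Fin.last 4).castSucc.castSucc.castSucc.castSucc.castSucc : Fin 10) = 4 from rfl,
    show ((Fin.last 5).castSucc.castSucc.castSucc.castSucc : Fin 10) = 5 from rfl,
    show ((Fin.last 6).castSucc.castSucc.castSucc : Fin 10) = 6 from rfl,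
    show ((Fin.last 7).castSucc.castSucc : Fin 10) = 7 from rfl,
    show ((Fin.last 8).castSucc : Fin 10) = 8 from rfl,
    show ((Fin.last 9) : Fin 10) = 9 from rfl,
    show ((Fin.last 0).castSucc.castSucc.castSucc.castSucc.castSucc.castSucc.castSucc.castSucc.castSucc : Fin 10) = 0 from rfl]
  simp [Fin.sum_univ_one]

lemma xi1' : xi = Complex.ofReal ((1+Real.sqrt 5)/4) + Complex.ofReal sp * Complex.I := by
  rw [← pow_one xi, xi1]


lemma not_mem_L (n : ℕ) (p q : ℤ) (hq : (n:ℤ) < 2*q) : ((p:ℝ) + (q:ℝ)*tau) ∉ L n := by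
  rintro ⟨m, hsum, heq⟩
  rw [sum10] at heq hsum
  simp only [show ((0:Fin 10):ℕ) = 0 from rfl, show ((1:Fin 10):ℕ) = 1 from rfl,
    show ((2:Fin 10):ℕ) = 2 from rfl, show ((3:Fin 10):ℕ) = 3 from rfl,
    show ((4:Fin 10):ℕ) = 4 from rfl, show ((5:Fin 10):ℕ) = 5 from rfl,
    show ((6:Fin 10):ℕ) = 6 from rfl, show ((7:Fin 10):ℕ) = 7 from rfl,
    show ((8:Fin 10):ℕ) = 8 from rfl, show ((9:Fin 10):ℕ) = 9 from rfl,
    xi0, xi1, xi2, xi3, xi4, xi5, xi6, xi7, xi8, xi9] at heq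
  have hre := congrArg Complex.re heq
  have him := congrArg Complex.im heq
  simp at hre him
  simp only [tau] at hre
  have hE : sp * ((2*(m 1:ℝ) + 2*(m 4) - 2*(m 6) - 2*(m 9) + (m 2) + (m 3) - (m 7) - (m 8))
      + ((m 2:ℝ) + (m 3) - (m 7) - (m 8)) * Real.sqrt 5) = 0 := by
    linear_combination (-2 : ℝ) * him
  have hE' := (mul_eq_zero.mp hE).resolve_left sp_ne
  have h1 : ((2*(m 1:ℤ) + 2*(m 4) - 2*(m 6) - 2*(m 9) + m 2 + m 3 - m 7 - m 8 : ℤ) : ℝ)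
      + (((m 2:ℤ) + m 3 - m 7 - m 8 : ℤ) : ℝ) * Real.sqrt 5 = 0 := by
    push_cast; linear_combination hE'
  obtain ⟨hu, hv⟩ := int_sqrt5 h1
  have h2 : ((4*(m 0:ℤ) - 4*(m 5) + m 1 - m 2 + m 3 - m 4 - m 6 + m 7 - m 8 + m 9
        - 4*p - 2*q : ℤ) : ℝ)
      + (((m 1:ℤ) + m 2 - m 3 - m 4 - m 6 - m 7 + m 8 + m 9 - 2*q : ℤ) : ℝ) * Real.sqrt 5 = 0 := by
    push_cast; linear_combination (-4 : ℝ) * hre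
  obtain ⟨hc, hd⟩ := int_sqrt5 h2
  omega

lemma sqrt5_ge : 2 ≤ Real.sqrt 5 := by
  nlinarith [sqrt5_sq, Real.sqrt_nonneg 5]

/-- Lemma 6.10: for every n ≥ 3 the inclusion L(n) ⊆ Σ([-n,n]) ∩ [-n,n] is strict:
there is a point of the cut-and-project set Σ([-n,n]) in [-n,n] not belonging to L(n).
For n = 3, the point -1 + 2τ is such a deficiency. -/
theorem deficiencies_occur :
    (∀ n : ℕ, 3 ≤ n → ∃ p q : ℤ,
      |(p : ℝ) + (q : ℝ) * tau| ≤ (n : ℝ) ∧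
      |(p : ℝ) + (q : ℝ) * tau'| ≤ (n : ℝ) ∧
      ((p : ℝ) + (q : ℝ) * tau) ∉ L n) ∧
    (|(-1 : ℝ) + 2 * tau| ≤ (3 : ℝ) ∧ |(-1 : ℝ) + 2 * tau'| ≤ (3 : ℝ) ∧
      ((-1 : ℝ) + 2 * tau) ∉ L 3) := by
  have hs5 := sqrt5_lt
  have hs5' := sqrt5_ge
  constructor
  · intro n hn
    set q : ℤ := ((n / 2 : ℕ) : ℤ) + 1 with hqdef
    have hq2 : (n:ℤ) < 2*q := by omega
    have hq9 : 9*q ≤ 8*(n:ℤ) - 4 := by omega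
    have hq1 : 1 ≤ q := by omega
    have hq9' : (9:ℝ)*(q:ℝ) ≤ 8*(n:ℝ) - 4 := by exact_mod_cast hq9
    have hq1' : (1:ℝ) ≤ (q:ℝ) := by exact_mod_cast hq1
    have hn' : (3:ℝ) ≤ (n:ℝ) := by exact_mod_cast hn
    set p : ℤ := ⌊(n:ℝ) - q*tau⌋ with hpdef
    have hfl : (p:ℝ) ≤ (n:ℝ) - q*tau := Int.floor_le _
    have hfl2 : (n:ℝ) - q*tau < p + 1 := Int.lt_floor_add_one _
    have htau : tau = (1 + Real.sqrt 5)/2 := rfl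
    have htau' : tau' = 1 - tau := rfl
    refine ⟨p, q, ?_, ?_, not_mem_L n p q hq2⟩
    · rw [abs_le]
      constructor <;> nlinarith [Real.sqrt_nonneg 5]
    · rw [abs_le]
      constructor <;> nlinarith [Real.sqrt_nonneg 5]
  · have hnot := not_mem_L 3 (-1) 2 (by norm_num)
    norm_num at hnot
    refine ⟨?_, ?_, hnot⟩
    · rw [abs_le, tau]; constructor <;> nlinarith
    · rw [abs_le, tau', tau]; constructor <;> nlinarith
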